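/- (Pointwise inhomogeneous distortion inequality) Let K ≥ 1, m ≥ n ≥ 2, p ∈ (1,∞), and let ω ∈ Λⁿℝᵐ be a calibration. Let M₀, M₁ : ℝⁿ → ℝᵐ be linear maps such that M₁ − M₀ has rank at most one and ‖M₀‖ⁿ ≤ K·ω(M₀e₁,…,M₀eₙ), where ‖·‖ is the operator norm. Then ‖M₁‖^p ≤ K·‖M₁‖^{p−n}·ω(M₁e₁,…,M₁eₙ) + K·(p + n + |p − n|)·(‖M₁‖ + ‖M₁ − M₀‖)^{p−1}·‖M₁ − M₀‖, where the term ‖M₁‖^{p−n}·ω(M₁e₁,…,M₁eₙ) is interpreted as 0 when M₁ = 0. -/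

import Mathlib

noncomputable section
open MeasureTheory Real Set Filter
open scoped ENNReal Topology

/-- `ℝⁿ` with the Euclidean norm. -/
abbrev Euc (n : ℕ) : Type := EuclideanSpace ℝ (Fin n)

/-- The `i`-th standard basis vector of `ℝⁿ`. -/
def stdVec (n : ℕ) (i : Fin n) : Euc n := EuclideanSpace.single i 1

/-- An `n`-covector `ω ∈ Λⁿℝᵐ` is a calibration if its comass equals `1`. -/
def IsCalibration {m n : ℕ} (ω : AlternatingMap ℝ (Euc m) ℝ (Fin n)) : Prop :=
  (∀ v : Fin n → Euc m, Orthonormal ℝ v → ω v ≤ 1) ∧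
  (∃ v : Fin n → Euc m, Orthonormal ℝ v ∧ ω v = 1)

/-- A linear map has rank at most one: its image lies in the span of a single vector. -/
def RankAtMostOne {n m : ℕ} (R : Euc n →L[ℝ] Euc m) : Prop :=
  ∃ u : Euc m, ∀ x : Euc n, ∃ c : ℝ, R x = c • u

open scoped RealInnerProductSpace

/-! ### Auxiliary lemmas -/

private instance finWellFoundedLT (n : ℕ) : WellFoundedLT (Fin n) := inferInstance

private lemma pow_sub_pow_le_aux (n : ℕ) {a b : ℝ} (hb : 0 ≤ b) (hba : b ≤ a) :
    a ^ n - b ^ n ≤ n * a ^ (n - 1) * (a - b) := by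
  have ha : 0 ≤ a := hb.trans hba
  rw [← geom_sum₂_mul a b n]
  have h1 : ∑ i ∈ Finset.range n, a ^ i * b ^ (n - 1 - i) ≤ n * a ^ (n - 1) := by
    calc ∑ i ∈ Finset.range n, a ^ i * b ^ (n - 1 - i)
        ≤ ∑ _i ∈ Finset.range n, a ^ (n - 1) := by
          apply Finset.sum_le_sum
          intro i hi
          have hi' : i ≤ n - 1 := by have := Finset.mem_range.mp hi; omega
          calc a ^ i * b ^ (n - 1 - i) ≤ a ^ i * a ^ (n - 1 - i) :=
                mul_le_mul_of_nonneg_left (pow_le_pow_left₀ hb hba _) (pow_nonneg ha i)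
            _ = a ^ (n - 1) := by rw [← pow_add]; congr 1; omega
      _ = n * a ^ (n - 1) := by
          rw [Finset.sum_const, Finset.card_range, nsmul_eq_mul]
  exact mul_le_mul_of_nonneg_right h1 (by linarith)

/-- An alternating map vanishes when two of its arguments are parallel. -/
private lemma omega_zero_of_parallel {m n : ℕ} (ω : AlternatingMap ℝ (Euc m) ℝ (Fin n))
    (v : Fin n → Euc m) (u : Euc m) {i j : Fin n} (hij : i ≠ j)
    {ci cj : ℝ} (hi : v i = ci • u) (hj : v j = cj • u) : ω v = 0 := by
  classical
  have h1 : ω v = ci • ω (Function.update v i u) := by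
    conv_lhs => rw [← Function.update_eq_self i v, hi]
    exact ω.map_update_smul v i ci u
  have h2 : Function.update v i u j = cj • u := by
    rw [Function.update_of_ne (Ne.symm hij), hj]
  have h3 : ω (Function.update v i u)
      = cj • ω (Function.update (Function.update v i u) j u) := by
    conv_lhs => rw [← Function.update_eq_self j (Function.update v i u), h2]
    exact ω.map_update_smul _ j cj u
  have h4 : ω (Function.update (Function.update v i u) j u) = 0 := by
    apply ω.map_eq_zero_of_eq _ (i := i) (j := j) _ hij
    rw [Function.update_of_ne hij, Function.update_self, Function.update_self]
  rw [h1, h3, h4, smul_zero, smul_zero]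

private lemma inner_eq_zero_of_span {m : ℕ} {k : ℕ} {u : Fin k → Euc m}
    (hu : Orthonormal ℝ u) {s : Set (Fin k)} {x : Euc m}
    (hx : x ∈ Submodule.span ℝ (u '' s)) {j : Fin k} (hj : j ∉ s) : ⟪u j, x⟫ = 0 := by
  induction hx using Submodule.span_induction with
  | mem y hy =>
    obtain ⟨i, his, rfl⟩ := hy
    exact hu.2 (fun h => hj (h ▸ his))
  | zero => simp
  | add a b _ _ iha ihb => simp [inner_add_right, iha, ihb]
  | smul c a _ iha => simp [inner_smul_right, iha]

private lemma repr_span {m : ℕ} {k : ℕ} {u : Fin k → Euc m} (hu : Orthonormal ℝ u)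
    {x : Euc m} (hx : x ∈ Submodule.span ℝ (Set.range u)) :
    x = ∑ j, ⟪u j, x⟫ • u j := by
  classical
  induction hx using Submodule.span_induction with
  | mem y hy =>
    obtain ⟨i, rfl⟩ := hy
    simp [orthonormal_iff_ite.mp hu, ite_smul, Finset.sum_ite_eq']
  | zero => simp
  | add a b _ _ iha ihb =>
    conv_lhs => rw [iha, ihb]
    rw [← Finset.sum_add_distrib]
    simp [inner_add_right, add_smul]
  | smul c a _ iha =>
    conv_lhs => rw [iha]
    rw [Finset.smul_sum]
    simp [inner_smul_right, mul_smul]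

/-- An injective map on `Fin n` satisfying `r i ≤ i` is the identity. -/
private lemma inj_le_eq_id {n : ℕ} (r : Fin n → Fin n) (hinj : Function.Injective r)
    (hle : ∀ i, r i ≤ i) (i : Fin n) : r i = i := by
  suffices h : ∀ k : ℕ, ∀ i : Fin n, (i : ℕ) = k → r i = i from h (i : ℕ) i rfl
  intro k
  induction k using Nat.strong_induction_on with
  | _ k ih =>
    intro i hik
    rcases lt_or_eq_of_le (hle i) with h | h
    · have hv : ((r i : ℕ)) < k := hik ▸ (Fin.lt_def.mp h)
      have h2 : r (r i) = r i := ih ((r i : ℕ)) hv (r i) rfl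
      exact absurd (hinj h2) (ne_of_lt h)
    · exact h

/-- A calibration is bounded by 1 in absolute value on orthonormal families. -/
private lemma abs_omega_le_one {m n : ℕ} (hn : 0 < n) (ω : AlternatingMap ℝ (Euc m) ℝ (Fin n))
    (hω : IsCalibration ω) {v : Fin n → Euc m} (hv : Orthonormal ℝ v) : |ω v| ≤ 1 := by
  classical
  rw [abs_le]
  refine ⟨?_, hω.1 v hv⟩
  set i0 : Fin n := ⟨0, hn⟩
  have hw : Orthonormal ℝ (Function.update v i0 (-(v i0))) := by
    constructor
    · intro i
      rcases eq_or_ne i i0 with rfl | h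
      · simp [hv.1]
      · simp [Function.update_of_ne h, hv.1]
    · intro i j hij
      rcases eq_or_ne i i0 with rfl | hi <;> rcases eq_or_ne j i0 with rfl | hj
      · exact absurd rfl hij
      · simp [Function.update_self, Function.update_of_ne hj, inner_neg_left, hv.2 hij]
      · simp [Function.update_self, Function.update_of_ne hi, inner_neg_right, hv.2 hij]
      · simp [Function.update_of_ne hi, Function.update_of_ne hj, hv.2 hij]
  have h1 := hω.1 _ hw
  have h2 : ω (Function.update v i0 (-(v i0))) = -ω v := by
    rw [ω.map_update_neg, Function.update_eq_self]
  rw [h2] at h1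
  linarith

/-- Hadamard-type estimate: a calibration is bounded by the product of the norms. -/
private lemma abs_omega_le_prod {m n : ℕ} (hn : 0 < n) (ω : AlternatingMap ℝ (Euc m) ℝ (Fin n))
    (hω : IsCalibration ω) (v : Fin n → Euc m) : |ω v| ≤ ∏ i, ‖v i‖ := by
  classical
  haveI : NeZero n := ⟨by omega⟩
  by_cases hli : LinearIndependent ℝ v
  swap
  · rw [ω.map_linearDependent v hli]
    simpa using Finset.prod_nonneg (fun i _ => norm_nonneg (v i))
  set u : Fin n → Euc m := InnerProductSpace.gramSchmidtNormed ℝ v with hu_def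
  have hu : Orthonormal ℝ u := InnerProductSpace.gramSchmidtNormed_orthonormal (𝕜 := ℝ) (f := v) hli
  set c : Fin n → Fin n → ℝ := fun i j => ⟪u j, v i⟫ with hc_def
  have hrepr : ∀ i, v i = ∑ j, c i j • u j := by
    intro i
    apply repr_span hu
    have h1 : v i ∈ Submodule.span ℝ (Set.range v) := Submodule.subset_span ⟨i, rfl⟩
    rwa [← InnerProductSpace.span_gramSchmidt ℝ v, ← InnerProductSpace.span_gramSchmidtNormed_range] at h1
  have htri : ∀ i j : Fin n, i < j → c i j = 0 := by
    intro i j hij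
    have hmem : v i ∈ Submodule.span ℝ (u '' Set.Iic i) := by
      rw [hu_def, InnerProductSpace.span_gramSchmidtNormed, InnerProductSpace.span_gramSchmidt_Iic]
      exact Submodule.subset_span ⟨i, le_refl i, rfl⟩
    exact inner_eq_zero_of_span hu hmem (by simpa using not_le.2 hij)
  have hexp : ω v = (∏ i, c i i) * ω u := by
    have e0 : ω v = ω (fun i => ∑ j, c i j • u j) := by
      congr 1; funext i; exact hrepr i
    have e1 : ω.toMultilinearMap (fun i => ∑ j, c i j • u j)
        = ∑ r : Fin n → Fin n, ω.toMultilinearMap (fun i => c i (r i) • u (r i)) :=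
      ω.toMultilinearMap.map_sum (fun i j => c i j • u j)
    have e2 : ∀ r : Fin n → Fin n,
        ω.toMultilinearMap (fun i => c i (r i) • u (r i))
          = (∏ i, c i (r i)) • ω (fun i => u (r i)) :=
      fun r => ω.toMultilinearMap.map_smul_univ (fun i => c i (r i)) (fun i => u (r i))
    have e3 : ω v = ∑ r : Fin n → Fin n, (∏ i, c i (r i)) • ω (fun i => u (r i)) := by
      rw [e0]
      show ω.toMultilinearMap _ = _
      rw [e1]
      exact Finset.sum_congr rfl (fun r _ => e2 r)
    rw [e3, Finset.sum_eq_single id]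
    · simp [smul_eq_mul]
    · intro r _ hr
      by_cases hinj : Function.Injective r
      · have hle : ∃ i, ¬ r i ≤ i := by
          by_contra h
          push_neg at h
          exact hr (funext (inj_le_eq_id r hinj h))
        obtain ⟨i, hi⟩ := hle
        have : c i (r i) = 0 := htri i (r i) (lt_of_not_ge hi)
        rw [Finset.prod_eq_zero (Finset.mem_univ i) this, zero_smul]
      · obtain ⟨i, j, heq, hne⟩ := Function.not_injective_iff.mp hinj
        rw [ω.map_eq_zero_of_eq (fun i => u (r i)) (i := i) (j := j) (congrArg u heq) hne,
          smul_zero]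
    · intro h
      exact absurd (Finset.mem_univ id) h
  rw [hexp, abs_mul]
  have h1 : |ω u| ≤ 1 := abs_omega_le_one hn ω hω hu
  have h2 : |∏ i, c i i| ≤ ∏ i, ‖v i‖ := by
    rw [Finset.abs_prod]
    apply Finset.prod_le_prod (fun i _ => abs_nonneg _)
    intro i _
    calc |c i i| ≤ ‖u i‖ * ‖v i‖ := abs_real_inner_le_norm (u i) (v i)
      _ = ‖v i‖ := by rw [hu.1 i, one_mul]
  calc |∏ i, c i i| * |ω u| ≤ (∏ i, ‖v i‖) * 1 :=
        mul_le_mul h2 h1 (abs_nonneg _) (Finset.prod_nonneg (fun i _ => norm_nonneg _))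
    _ = ∏ i, ‖v i‖ := mul_one _

/-- Expanding an alternating map at a perturbation whose increments are all parallel:
only the single-slot substitutions survive. -/
private lemma omega_perturb {m n : ℕ} (ω : AlternatingMap ℝ (Euc m) ℝ (Fin n))
    (g r : Fin n → Euc m) (u : Euc m) (hr : ∀ i, ∃ c : ℝ, r i = c • u) :
    ω (fun i => g i + r i) = ω g + ∑ i, ω (Function.update g i (r i)) := by
  classical
  -- first, replacing any set of unperturbed slots by perturbed ones doesn't change
  -- the value of a single-slot substitution
  have key : ∀ s : Finset (Fin n), ∀ j ∉ s,
      ω (Function.update (s.piecewise (fun i => g i + r i) g) j (r j))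
        = ω (Function.update g j (r j)) := by
    intro s
    induction s using Finset.induction_on with
    | empty => intro j _; rw [Finset.piecewise_empty]
    | @insert k s hk ih =>
      intro j hj
      have hjk : j ≠ k := fun h => hj (h ▸ Finset.mem_insert_self k s)
      have hjs : j ∉ s := fun h => hj (Finset.mem_insert_of_mem h)
      rw [Finset.piecewise_insert]
      rw [Function.update_comm hjk.symm]
      rw [ω.map_update_add]
      have hz : ω (Function.update
          (Function.update (s.piecewise (fun i => g i + r i) g) j (r j)) k (r k)) = 0 := by
        obtain ⟨ck, hck⟩ := hr k
        obtain ⟨cj, hcj⟩ := hr j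
        apply omega_zero_of_parallel ω _ u hjk.symm (ci := ck) (cj := cj)
        · rw [Function.update_self, hck]
        · rw [Function.update_of_ne hjk, Function.update_self, hcj]
      rw [hz, add_zero]
      have hXk : s.piecewise (fun i => g i + r i) g k = g k :=
        Finset.piecewise_eq_of_notMem _ _ _ hk
      rw [Function.update_comm hjk.symm.symm]
      rw [← hXk, Function.update_eq_self]
      exact ih j hjs
  have main : ∀ s : Finset (Fin n),
      ω (s.piecewise (fun i => g i + r i) g)
        = ω g + ∑ i ∈ s, ω (Function.update g i (r i)) := by
    intro s
    induction s using Finset.induction_on with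
    | empty => rw [Finset.piecewise_empty, Finset.sum_empty, add_zero]
    | @insert k s hk ih =>
      rw [Finset.piecewise_insert]
      have : ω (Function.update (s.piecewise (fun i => g i + r i) g) k (g k + r k))
          = ω (s.piecewise (fun i => g i + r i) g)
            + ω (Function.update (s.piecewise (fun i => g i + r i) g) k (r k)) := by
        rw [ω.map_update_add]
        congr 2
        have hXk : s.piecewise (fun i => g i + r i) g k = g k :=
          Finset.piecewise_eq_of_notMem _ _ _ hk
        rw [← hXk, Function.update_eq_self]
      rw [this, key s k hk, ih, Finset.sum_insert hk]
      ring
  have := main Finset.univ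
  rwa [Finset.piecewise_univ] at this

set_option maxHeartbeats 1000000 in
/-- Pointwise inhomogeneous distortion inequality for a rank-one perturbation. -/
theorem pointwise_inhomogeneous_distortion
    (K : ℝ) (hK : 1 ≤ K) (m n : ℕ) (hn : 2 ≤ n) (hm : n ≤ m)
    (p : ℝ) (hp : 1 < p)
    (ω : AlternatingMap ℝ (Euc m) ℝ (Fin n)) (hω : IsCalibration ω)
    (M₀ M₁ : Euc n →L[ℝ] Euc m)
    (hrank : RankAtMostOne (M₁ - M₀))
    (hdist : ‖M₀‖ ^ n ≤ K * ω (fun i => M₀ (stdVec n i))) :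
    ‖M₁‖ ^ p ≤
      K * ‖M₁‖ ^ (p - n) * ω (fun i => M₁ (stdVec n i)) +
      K * (p + n + |p - n|) * (‖M₁‖ + ‖M₁ - M₀‖) ^ (p - 1) * ‖M₁ - M₀‖ := by
  classical
  have hn0 : 0 < n := by omega
  have hp0 : (0:ℝ) < p := lt_trans one_pos hp
  have hK0 : (0:ℝ) < K := lt_of_lt_of_le one_pos hK
  set a : ℝ := ‖M₁‖ with ha_def
  set t : ℝ := ‖M₁ - M₀‖ with ht_def
  set b : ℝ := ‖M₀‖ with hb_def
  have ha0 : 0 ≤ a := norm_nonneg _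
  have ht0 : 0 ≤ t := norm_nonneg _
  have hb0 : 0 ≤ b := norm_nonneg _
  have hCnonneg : (0:ℝ) ≤ p + n + |p - n| := by
    have h1 := abs_nonneg (p - (n:ℝ))
    have h2 : (0:ℝ) ≤ (n:ℝ) := Nat.cast_nonneg n
    linarith
  have hstd : ∀ i : Fin n, ‖stdVec n i‖ = 1 := by
    intro i
    simp [stdVec, EuclideanSpace.norm_single]
  set g : Fin n → Euc m := fun i => M₁ (stdVec n i) with hg_def
  rcases eq_or_lt_of_le ha0 with ha | ha
  · -- degenerate case ‖M₁‖ = 0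
    have hM1 : M₁ = 0 := by rwa [eq_comm, norm_eq_zero] at ha
    have hg0 : ω (fun i => M₁ (stdVec n i)) = 0 := by
      apply ω.map_eq_zero_of_eq (i := ⟨0, by omega⟩) (j := ⟨1, by omega⟩)
      · simp [hM1]
      · simp [Fin.ext_iff]
    rw [hg0, ← ha, Real.zero_rpow (ne_of_gt hp0), mul_zero]
    have : 0 ≤ K * (p + ↑n + |p - ↑n|) * (0 + t) ^ (p - 1) * t := by
      apply mul_nonneg (mul_nonneg (mul_nonneg (le_of_lt hK0) hCnonneg) _) ht0
      exact Real.rpow_nonneg (by linarith) _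
    linarith
  -- main case ‖M₁‖ > 0
  obtain ⟨u, hu⟩ := hrank
  set r : Fin n → Euc m := fun i => (M₀ - M₁) (stdVec n i) with hr_def
  have hr_par : ∀ i, ∃ c : ℝ, r i = c • u := by
    intro i
    obtain ⟨c, hc⟩ := hu (stdVec n i)
    refine ⟨-c, ?_⟩
    have h2 : r i = -((M₁ - M₀) (stdVec n i)) := by
      simp [hr_def, ContinuousLinearMap.sub_apply]
    rw [h2, hc, neg_smul]
  have hsum : ω (fun i => M₀ (stdVec n i)) = ω g + ∑ i, ω (Function.update g i (r i)) := by
    have h1 : (fun i => M₀ (stdVec n i)) = fun i => g i + r i := by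
      funext i
      simp [hg_def, hr_def, ContinuousLinearMap.sub_apply]
    rw [h1]
    exact omega_perturb ω g r u hr_par
  have hgle : ∀ i, ‖g i‖ ≤ a := by
    intro i
    calc ‖g i‖ ≤ ‖M₁‖ * ‖stdVec n i‖ := M₁.le_opNorm _
      _ = a := by rw [hstd i, mul_one]
  have hrle : ∀ i, ‖r i‖ ≤ t := by
    intro i
    calc ‖r i‖ ≤ ‖M₀ - M₁‖ * ‖stdVec n i‖ := (M₀ - M₁).le_opNorm _
      _ = ‖M₀ - M₁‖ := by rw [hstd i, mul_one]
      _ = t := by rw [ht_def, norm_sub_rev]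
  have hsingle : ∀ i, |ω (Function.update g i (r i))| ≤ a ^ (n - 1) * t := by
    intro i
    have h1 := abs_omega_le_prod hn0 ω hω (Function.update g i (r i))
    have h2 : (fun j => ‖Function.update g i (r i) j‖)
        = Function.update (fun j => ‖g j‖) i ‖r i‖ := by
      funext j
      rcases eq_or_ne j i with rfl | hj
      · rw [Function.update_self, Function.update_self]
      · rw [Function.update_of_ne hj, Function.update_of_ne hj]
    have h3 : ∏ j, ‖Function.update g i (r i) j‖ ≤ a ^ (n - 1) * t := by
      calc ∏ j, ‖Function.update g i (r i) j‖
          = ∏ j, Function.update (fun j => ‖g j‖) i ‖r i‖ j := by rw [← h2]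
        _ = ‖r i‖ * ∏ j ∈ Finset.univ \ {i}, ‖g j‖ :=
            Finset.prod_update_of_mem (Finset.mem_univ i) _ _
        _ ≤ t * a ^ (n - 1) := by
            apply mul_le_mul (hrle i) ?_ (Finset.prod_nonneg fun j _ => norm_nonneg _) ht0
            calc ∏ j ∈ Finset.univ \ {i}, ‖g j‖ ≤ ∏ _j ∈ Finset.univ \ {i}, a :=
                  Finset.prod_le_prod (fun j _ => norm_nonneg _) (fun j _ => hgle j)
              _ = a ^ (n - 1) := by
                  rw [Finset.prod_const, Finset.card_sdiff_of_subset (Finset.subset_univ {i}),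
                    Finset.card_univ, Fintype.card_fin, Finset.card_singleton]
        _ = a ^ (n - 1) * t := mul_comm _ _
    exact h1.trans h3
  have hdiff : |ω (fun i => M₀ (stdVec n i)) - ω g| ≤ n * a ^ (n - 1) * t := by
    rw [hsum, add_sub_cancel_left]
    calc |∑ i, ω (Function.update g i (r i))| ≤ ∑ i, |ω (Function.update g i (r i))| :=
          Finset.abs_sum_le_sum_abs _ _
      _ ≤ ∑ _i : Fin n, a ^ (n - 1) * t := Finset.sum_le_sum (fun i _ => hsingle i)
      _ = n * (a ^ (n - 1) * t) := by
          rw [Finset.sum_const, Finset.card_univ, Fintype.card_fin, nsmul_eq_mul]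
      _ = n * a ^ (n - 1) * t := (mul_assoc _ _ _).symm
  -- scalar estimates
  have habt : a - b ≤ t := by
    have := norm_sub_norm_le M₁ M₀
    rw [← ha_def, ← hb_def, ← ht_def] at this
    linarith
  have h3 : a ^ n ≤ b ^ n + n * a ^ (n - 1) * t := by
    rcases le_or_gt a b with h | h
    · have : a ^ n ≤ b ^ n := pow_le_pow_left₀ ha0 h n
      have hnn : 0 ≤ (n:ℝ) * a ^ (n - 1) * t :=
        mul_nonneg (mul_nonneg (Nat.cast_nonneg n) (pow_nonneg ha0 _)) ht0
      linarith
    · have h4 := pow_sub_pow_le_aux n hb0 (le_of_lt h)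
      have h5 : (n:ℝ) * a ^ (n - 1) * (a - b) ≤ n * a ^ (n - 1) * t :=
        mul_le_mul_of_nonneg_left habt
          (mul_nonneg (Nat.cast_nonneg n) (pow_nonneg ha0 _))
      linarith
  have hΩ : ω (fun i => M₀ (stdVec n i)) ≤ ω g + n * a ^ (n - 1) * t := by
    have := (abs_le.mp hdiff).2
    linarith
  -- rpow manipulations
  have hX0 : 0 ≤ a ^ (p - n) := Real.rpow_nonneg ha0 _
  have e1 : a ^ p = a ^ (p - n) * a ^ n := by
    rw [← Real.rpow_natCast a n, ← Real.rpow_add ha]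
    congr 1
    ring
  have e2 : a ^ (p - n) * a ^ (n - 1) = a ^ (p - 1) := by
    rw [← Real.rpow_natCast a (n - 1), ← Real.rpow_add ha]
    congr 1
    rw [Nat.cast_sub (by omega : 1 ≤ n)]
    push_cast
    ring
  have e3 : a ^ (p - 1) ≤ (a + t) ^ (p - 1) :=
    Real.rpow_le_rpow ha0 (by linarith) (by linarith)
  -- combine
  have step1 : a ^ p ≤ a ^ (p - n) * b ^ n + n * a ^ (p - 1) * t := by
    rw [e1]
    have := mul_le_mul_of_nonneg_left h3 hX0
    calc a ^ (p - n) * a ^ n ≤ a ^ (p - n) * (b ^ n + ↑n * a ^ (n - 1) * t) := this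
      _ = a ^ (p - n) * b ^ n + ↑n * (a ^ (p - n) * a ^ (n - 1)) * t := by ring
      _ = a ^ (p - n) * b ^ n + ↑n * a ^ (p - 1) * t := by rw [e2]
  have step2 : a ^ (p - n) * b ^ n
      ≤ K * a ^ (p - n) * ω g + K * n * a ^ (p - 1) * t := by
    have hb1 : b ^ n ≤ K * (ω g + n * a ^ (n - 1) * t) := by
      calc b ^ n ≤ K * ω (fun i => M₀ (stdVec n i)) := hdist
        _ ≤ K * (ω g + n * a ^ (n - 1) * t) := mul_le_mul_of_nonneg_left hΩ (le_of_lt hK0)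
    calc a ^ (p - n) * b ^ n ≤ a ^ (p - n) * (K * (ω g + n * a ^ (n - 1) * t)) :=
          mul_le_mul_of_nonneg_left hb1 hX0
      _ = K * a ^ (p - n) * ω g + K * n * (a ^ (p - n) * a ^ (n - 1)) * t := by ring
      _ = K * a ^ (p - n) * ω g + K * n * a ^ (p - 1) * t := by rw [e2]
  have step3 : (K + 1) * n * a ^ (p - 1) * t
      ≤ K * (p + n + |p - n|) * (a + t) ^ (p - 1) * t := by
    have hc1 : (K + 1) * n ≤ K * (p + n + |p - n|) := by
      have h1 : (n:ℝ) - p ≤ |p - n| := by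
        rw [abs_sub_comm]
        exact le_abs_self _
      have h2 : 2 * (n:ℝ) ≤ p + n + |p - n| := by linarith
      have h3 : (K + 1) * n ≤ 2 * K * n := by nlinarith [Nat.cast_nonneg (α := ℝ) n]
      have h4 : 2 * K * (n:ℝ) ≤ K * (p + n + |p - n|) := by nlinarith
      linarith
    have hc2 : a ^ (p - 1) * t ≤ (a + t) ^ (p - 1) * t :=
      mul_le_mul_of_nonneg_right e3 ht0
    have hc0 : 0 ≤ a ^ (p - 1) * t := mul_nonneg (Real.rpow_nonneg ha0 _) ht0
    have hc3 : 0 ≤ (K + 1) * (n:ℝ) :=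
      mul_nonneg (by linarith) (Nat.cast_nonneg n)
    calc (K + 1) * ↑n * a ^ (p - 1) * t = ((K + 1) * ↑n) * (a ^ (p - 1) * t) := by ring
      _ ≤ (K * (p + ↑n + |p - ↑n|)) * ((a + t) ^ (p - 1) * t) := by
          apply mul_le_mul hc1 hc2 hc0 (by positivity)
      _ = K * (p + ↑n + |p - ↑n|) * (a + t) ^ (p - 1) * t := by ring
  have total : a ^ p ≤ K * a ^ (p - n) * ω g + (K + 1) * n * a ^ (p - 1) * t := by
    have := step1.trans (by linarith [step2] : a ^ (p - n) * b ^ n + ↑n * a ^ (p - 1) * t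
      ≤ K * a ^ (p - n) * ω g + K * ↑n * a ^ (p - 1) * t + ↑n * a ^ (p - 1) * t)
    calc a ^ p ≤ K * a ^ (p - n) * ω g + K * ↑n * a ^ (p - 1) * t + ↑n * a ^ (p - 1) * t :=
          this
      _ = K * a ^ (p - n) * ω g + (K + 1) * ↑n * a ^ (p - 1) * t := by ring
  calc a ^ p ≤ K * a ^ (p - n) * ω g + (K + 1) * n * a ^ (p - 1) * t := total
    _ ≤ K * a ^ (p - n) * ω g + K * (p + n + |p - n|) * (a + t) ^ (p - 1) * t := by
        linarith [step3]
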